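/- Let x^(k), v^(k), u^(k) be Plug-and-Play ADMM iterates for a differentiable f with gradient bounded by L√n and a bounded denoiser with constant C ≥ 0, where the positive sequence (ρ_k) is nondecreasing and satisfies ρ_k ≤ γ ρ_{k−1} for all k ≥ 1, with ρ_0 > 0 and γ > 1. Then there exists a constant C' > 0, depending only on λ, C, L, γ and ρ_0 (and in particular independent of k and n), such that Δ_{k+1} ≤ C'/√ρ_k for all k ≥ 2. -/

import Mathlib

open Filter Topology

private lemma inv_sqrt_le_aux {a b g : ℝ} (ha : 0 < a) (hb : 0 < b) (hg : 1 ≤ g)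
    (h : b ≤ g ^ 2 * a) : (Real.sqrt a)⁻¹ ≤ g * (Real.sqrt b)⁻¹ := by
  have hsa : 0 < Real.sqrt a := Real.sqrt_pos.2 ha
  have hsb : 0 < Real.sqrt b := Real.sqrt_pos.2 hb
  have hg0 : 0 < g := lt_of_lt_of_le one_pos hg
  have h1 : Real.sqrt b ≤ g * Real.sqrt a := by
    calc Real.sqrt b ≤ Real.sqrt (g ^ 2 * a) := Real.sqrt_le_sqrt h
    _ = g * Real.sqrt a := by
        rw [Real.sqrt_mul (by positivity), Real.sqrt_sq hg0.le]
  rw [inv_eq_one_div, show g * (Real.sqrt b)⁻¹ = g / Real.sqrt b from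
    (div_eq_mul_inv _ _).symm, div_le_div_iff₀ hsa hsb]
  nlinarith

set_option maxHeartbeats 1600000 in
/-- **Lemma 1 (uniform residual bound).**
For Plug-and-Play ADMM iterates with a nondecreasing parameter sequence satisfying
`ρ k ≤ γ * ρ (k-1)`, there is a constant `C' > 0` depending only on `λ, C, L, γ, ρ₀`
(in particular independent of `k` and of the dimension `n`) such that
`Δ (k+1) ≤ C'/√(ρ k)` for all `k ≥ 2`, where
`Δ (k+1) = (1/√n)(‖x^(k+1) − x^(k)‖ + ‖v^(k+1) − v^(k)‖ + ‖u^(k+1) − u^(k)‖)`. -/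
theorem plug_and_play_admm_residual_bound
    (lam C L γ ρ0 : ℝ) (hlam : 0 < lam) (hC : 0 ≤ C) (hγ : 1 < γ) (hρ0 : 0 < ρ0) :
    ∃ C' : ℝ, 0 < C' ∧
      ∀ (n : ℕ), 1 ≤ n →
      ∀ f : EuclideanSpace ℝ (Fin n) → ℝ, Differentiable ℝ f →
      (∀ z : EuclideanSpace ℝ (Fin n), ‖gradient f z‖ ≤ L * Real.sqrt n) →
      ∀ D : ℝ → EuclideanSpace ℝ (Fin n) → EuclideanSpace ℝ (Fin n),
      (∀ σ : ℝ, 0 < σ → ∀ z : EuclideanSpace ℝ (Fin n),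
        ‖D σ z - z‖ ^ 2 ≤ (n : ℝ) * σ ^ 2 * C) →
      ∀ ρ : ℕ → ℝ, (∀ k, 0 < ρ k) → ρ 0 = ρ0 → Monotone ρ →
      (∀ k, ρ (k + 1) ≤ γ * ρ k) →
      ∀ x v u : ℕ → EuclideanSpace ℝ (Fin n),
      (∀ k, ∀ z : EuclideanSpace ℝ (Fin n),
        f (x (k + 1)) + ρ k / 2 * ‖x (k + 1) - (v k - u k)‖ ^ 2
          ≤ f z + ρ k / 2 * ‖z - (v k - u k)‖ ^ 2) →
      (∀ k, v (k + 1) = D (Real.sqrt (lam / ρ k)) (x (k + 1) + u k)) →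
      (∀ k, u (k + 1) = u k + (x (k + 1) - v (k + 1))) →
      ∀ k, 2 ≤ k →
        (Real.sqrt n)⁻¹ *
            (‖x (k + 1) - x k‖ + ‖v (k + 1) - v k‖ + ‖u (k + 1) - u k‖)
          ≤ C' / Real.sqrt (ρ k) := by
  set A : ℝ := Real.sqrt (lam * C) with hAdef
  have hA : 0 ≤ A := Real.sqrt_nonneg _
  have hsρ0 : 0 < Real.sqrt ρ0 := Real.sqrt_pos.2 hρ0
  refine ⟨6 * γ * A + 4 * (max L 0) / Real.sqrt ρ0 + 1, by positivity, ?_⟩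
  intro n hn f hf hgrad D hD ρ hρpos hρ0eq hmono hγρ x v u hmin hv hu k hk
  have hnpos : (0 : ℝ) < n := by exact_mod_cast Nat.lt_of_lt_of_le Nat.zero_lt_one hn
  have hsn : 0 < Real.sqrt n := Real.sqrt_pos.2 hnpos
  -- L is nonnegative
  have hL : 0 ≤ L := by
    have h1 := hgrad 0
    have h2 := norm_nonneg (gradient f 0)
    nlinarith
  have hmaxL : max L 0 = L := max_eq_left hL
  -- Lipschitz bound for f
  have hlip : ∀ a b : EuclideanSpace ℝ (Fin n), ‖f a - f b‖ ≤ L * Real.sqrt n * ‖a - b‖ := by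
    intro a b
    refine convex_univ.norm_image_sub_le_of_norm_fderiv_le (fun z _ => hf z)
      (fun z _ => ?_) (Set.mem_univ b) (Set.mem_univ a)
    have : ‖fderiv ℝ f z‖ = ‖gradient f z‖ := by
      rw [show gradient f z = (InnerProductSpace.toDual ℝ _).symm (fderiv ℝ f z) from rfl,
        LinearIsometryEquiv.norm_map]
    rw [this]; exact hgrad z
  -- uniform bound on u
  have hU : ∀ j : ℕ, ‖u (j + 1)‖ ≤ Real.sqrt n * (A * (Real.sqrt (ρ j))⁻¹) := by
    intro j
    have hσ2 : 0 < lam / ρ j := div_pos hlam (hρpos j)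
    have hσ : 0 < Real.sqrt (lam / ρ j) := Real.sqrt_pos.2 hσ2
    have h1 := hD _ hσ (x (j + 1) + u j)
    have hsq : Real.sqrt (lam / ρ j) ^ 2 = lam / ρ j := Real.sq_sqrt hσ2.le
    rw [hsq] at h1
    have hid : u (j + 1) = -(D (Real.sqrt (lam / ρ j)) (x (j + 1) + u j) - (x (j + 1) + u j)) := by
      rw [hu j, hv j]; abel
    have h2 : ‖u (j + 1)‖ ^ 2 ≤ (n : ℝ) * (lam / ρ j) * C := by
      rw [hid, norm_neg]; exact h1
    have e : (Real.sqrt n * (A * (Real.sqrt (ρ j))⁻¹)) ^ 2 = (n : ℝ) * (lam / ρ j) * C := by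
      have e1 : Real.sqrt (n : ℝ) ^ 2 = n := Real.sq_sqrt hnpos.le
      have e2 : A ^ 2 = lam * C := Real.sq_sqrt (by positivity)
      have e3 : Real.sqrt (ρ j) ^ 2 = ρ j := Real.sq_sqrt (hρpos j).le
      have hρj := hρpos j
      field_simp [mul_pow, e1, e2, e3]
      rw [e1, e2, e3]; ring
    calc ‖u (j + 1)‖ = Real.sqrt (‖u (j + 1)‖ ^ 2) := (Real.sqrt_sq (norm_nonneg _)).symm
      _ ≤ Real.sqrt ((Real.sqrt n * (A * (Real.sqrt (ρ j))⁻¹)) ^ 2) := by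
          exact Real.sqrt_le_sqrt (by rw [e]; exact h2)
      _ = Real.sqrt n * (A * (Real.sqrt (ρ j))⁻¹) := Real.sqrt_sq (by positivity)
  -- v recursion identity
  have hvu : ∀ j : ℕ, v (j + 1) = x (j + 1) + u j - u (j + 1) := by
    intro j
    have h := hu j
    rw [h]; abel
  -- decompose k = m + 2
  obtain ⟨m, rfl⟩ : ∃ m, k = m + 2 := ⟨k - 2, by omega⟩
  set r : ℝ := (Real.sqrt (ρ (m + 2)))⁻¹ with hrdef
  have hρk := hρpos (m + 2)
  have hsρk : 0 < Real.sqrt (ρ (m + 2)) := Real.sqrt_pos.2 hρk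
  have hr : 0 < r := inv_pos.2 hsρk
  -- sqrt comparisons
  have hγ1 : (1 : ℝ) ≤ γ := hγ.le
  have hr1 : (Real.sqrt (ρ (m + 1)))⁻¹ ≤ γ * r := by
    refine inv_sqrt_le_aux (hρpos (m + 1)) hρk hγ1 ?_
    have h1 := hγρ (m + 1)
    nlinarith [hρpos (m + 1)]
  have hr2 : (Real.sqrt (ρ m))⁻¹ ≤ γ * r := by
    refine inv_sqrt_le_aux (hρpos m) hρk hγ1 ?_
    have h1 := hγρ (m + 1)
    have h2 := hγρ m
    nlinarith [hρpos m, hρpos (m + 1)]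
  have hrself : r ≤ γ * r := by nlinarith
  -- bound on the x-residual E
  have hE0 : ρ (m + 2) / 2 * ‖x (m + 3) - (v (m + 2) - u (m + 2))‖ ^ 2
      ≤ L * Real.sqrt n * ‖x (m + 3) - (v (m + 2) - u (m + 2))‖ := by
    have h1 := hmin (m + 2) (v (m + 2) - u (m + 2))
    rw [sub_self, norm_zero] at h1
    have h2 := hlip (v (m + 2) - u (m + 2)) (x (m + 3))
    have h3 : f (v (m + 2) - u (m + 2)) - f (x (m + 3))
        ≤ L * Real.sqrt n * ‖v (m + 2) - u (m + 2) - x (m + 3)‖ :=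
      le_trans (le_abs_self _) h2
    rw [show ‖v (m + 2) - u (m + 2) - x (m + 3)‖ = ‖x (m + 3) - (v (m + 2) - u (m + 2))‖ from
      norm_sub_rev _ _] at h3
    nlinarith
  have hEb : ‖x (m + 3) - (v (m + 2) - u (m + 2))‖ ≤ 2 * L * Real.sqrt n / ρ (m + 2) := by
    rcases (norm_nonneg (x (m + 3) - (v (m + 2) - u (m + 2)))).eq_or_lt with h | h
    · rw [← h]; positivity
    · rw [le_div_iff₀ hρk]
      have hgen : ∀ d : ℝ, 0 < d → ρ (m + 2) / 2 * d ^ 2 ≤ L * Real.sqrt n * d →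
          d * ρ (m + 2) ≤ 2 * L * Real.sqrt n := by
        intro d hd hdd
        have h4 : ρ (m + 2) / 2 * d ≤ L * Real.sqrt n :=
          le_of_mul_le_mul_right (by nlinarith) hd
        linarith
      exact hgen _ h hE0
  have hEr : 2 * L * Real.sqrt n / ρ (m + 2)
      ≤ Real.sqrt n * (2 * L / Real.sqrt ρ0 * r) := by
    have hρinv : (ρ (m + 2))⁻¹ ≤ (Real.sqrt ρ0)⁻¹ * r := by
      have h1 : Real.sqrt ρ0 ≤ Real.sqrt (ρ (m + 2)) := by
        refine Real.sqrt_le_sqrt ?_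
        rw [← hρ0eq]; exact hmono (Nat.zero_le _)
      have h2 : (Real.sqrt (ρ (m + 2)))⁻¹ ≤ (Real.sqrt ρ0)⁻¹ :=
        inv_anti₀ hsρ0 h1
      have h3 : (ρ (m + 2))⁻¹ = (Real.sqrt (ρ (m + 2)))⁻¹ * r := by
        rw [hrdef, ← mul_inv, Real.mul_self_sqrt hρk.le]
      rw [h3]
      exact mul_le_mul_of_nonneg_right h2 hr.le
    have : 2 * L * Real.sqrt n / ρ (m + 2) = (2 * L * Real.sqrt n) * (ρ (m + 2))⁻¹ := by
      rw [div_eq_mul_inv]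
    rw [this]
    have h4 : (2 * L * Real.sqrt n) * (ρ (m + 2))⁻¹
        ≤ (2 * L * Real.sqrt n) * ((Real.sqrt ρ0)⁻¹ * r) :=
      mul_le_mul_of_nonneg_left hρinv (by positivity)
    calc (2 * L * Real.sqrt n) * (ρ (m + 2))⁻¹
        ≤ (2 * L * Real.sqrt n) * ((Real.sqrt ρ0)⁻¹ * r) := h4
      _ = Real.sqrt n * (2 * L / Real.sqrt ρ0 * r) := by field_simp
  have hE : ‖x (m + 3) - (v (m + 2) - u (m + 2))‖
      ≤ Real.sqrt n * (2 * L / Real.sqrt ρ0 * r) := le_trans hEb hEr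
  -- u bounds specialized
  have hU1 : ‖u (m + 1)‖ ≤ Real.sqrt n * (A * (γ * r)) := by
    refine le_trans (hU m) ?_
    have := mul_le_mul_of_nonneg_left hr2 hA
    nlinarith [Real.sqrt_nonneg (n : ℝ)]
  have hU2 : ‖u (m + 2)‖ ≤ Real.sqrt n * (A * (γ * r)) := by
    refine le_trans (hU (m + 1)) ?_
    have := mul_le_mul_of_nonneg_left hr1 hA
    nlinarith [Real.sqrt_nonneg (n : ℝ)]
  have hU3 : ‖u (m + 3)‖ ≤ Real.sqrt n * (A * r) := hU (m + 2)
  -- identities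
  have hid1 : x (m + 3) - x (m + 2)
      = (u (m + 1) - u (m + 2)) + ((x (m + 3) - (v (m + 2) - u (m + 2))) - u (m + 2)) := by
    rw [hvu (m + 1)]; abel
  have hid2 : v (m + 3) - v (m + 2)
      = (x (m + 3) - (v (m + 2) - u (m + 2))) - u (m + 3) := by
    rw [hvu (m + 2)]; abel
  -- norm bounds on the three differences
  have hx : ‖x (m + 3) - x (m + 2)‖
      ≤ ‖u (m + 1)‖ + ‖u (m + 2)‖ + (‖x (m + 3) - (v (m + 2) - u (m + 2))‖ + ‖u (m + 2)‖) := by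
    rw [hid1]
    calc ‖(u (m + 1) - u (m + 2)) + ((x (m + 3) - (v (m + 2) - u (m + 2))) - u (m + 2))‖
        ≤ ‖u (m + 1) - u (m + 2)‖ + ‖(x (m + 3) - (v (m + 2) - u (m + 2))) - u (m + 2)‖ :=
          norm_add_le _ _
      _ ≤ _ := add_le_add (norm_sub_le _ _) (norm_sub_le _ _)
  have hvb : ‖v (m + 3) - v (m + 2)‖
      ≤ ‖x (m + 3) - (v (m + 2) - u (m + 2))‖ + ‖u (m + 3)‖ := by
    rw [hid2]; exact norm_sub_le _ _
  have hub : ‖u (m + 3) - u (m + 2)‖ ≤ ‖u (m + 3)‖ + ‖u (m + 2)‖ := norm_sub_le _ _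
  -- conclude
  rw [div_eq_mul_inv, ← hrdef]
  rw [inv_mul_le_iff₀ hsn]
  have hU3' : ‖u (m + 3)‖ ≤ Real.sqrt n * (A * (γ * r)) := by
    refine le_trans hU3 ?_
    nlinarith [mul_nonneg (mul_nonneg hsn.le hA) hr.le]
  have hsum : ‖x (m + 3) - x (m + 2)‖ + ‖v (m + 3) - v (m + 2)‖ + ‖u (m + 3) - u (m + 2)‖
      ≤ Real.sqrt n * ((6 * γ * A + 4 * L / Real.sqrt ρ0) * r) := by
    calc ‖x (m + 3) - x (m + 2)‖ + ‖v (m + 3) - v (m + 2)‖ + ‖u (m + 3) - u (m + 2)‖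
        ≤ 6 * (Real.sqrt n * (A * (γ * r))) + 2 * (Real.sqrt n * (2 * L / Real.sqrt ρ0 * r)) := by
          linarith [hx, hvb, hub, hU1, hU2, hU3', hE]
      _ = Real.sqrt n * ((6 * γ * A + 4 * L / Real.sqrt ρ0) * r) := by ring
  refine le_trans hsum ?_
  rw [hmaxL]
  nlinarith [mul_nonneg hsn.le hr.le]
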